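/- arXiv:2303.07608 — 6 statements merged into one kernel-verified Lean document; each statement's English description precedes it below -/
import Mathlib

section
/- Let δ₁, δ₂ > 0 and let W = [w₁, w₂] ∈ ℝ^{d×2} be a minimizer of ‖w₁‖² + ‖w₂‖² subject to the constraints δ_{y_i}(w_{y_i} - w_c)ᵀ h_i ≥ 1 for all i and all c ≠ y_i (the LDT max-margin problem for binary classification with labels y_i ∈ {1,2}). Then w₁ + w₂ = 0. -/
open scoped InnerProductSpace

/-- Centering of the binary LDT max-margin solution: w₁ + w₂ = 0. -/
theorem ldt_centering {d n : ℕ}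
    (h : Fin n → EuclideanSpace ℝ (Fin d)) (y : Fin n → Fin 2)
    (δ : Fin 2 → ℝ) (hδ : ∀ c, 0 < δ c)
    (w : Fin 2 → EuclideanSpace ℝ (Fin d))
    (feas : ∀ i, ∀ c, c ≠ y i → δ (y i) * ⟪w (y i) - w c, h i⟫_ℝ ≥ 1)
    (opt : ∀ w' : Fin 2 → EuclideanSpace ℝ (Fin d),
      (∀ i, ∀ c, c ≠ y i → δ (y i) * ⟪w' (y i) - w' c, h i⟫_ℝ ≥ 1) →
      ‖w 0‖ ^ 2 + ‖w 1‖ ^ 2 ≤ ‖w' 0‖ ^ 2 + ‖w' 1‖ ^ 2) :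
    w 0 + w 1 = 0 := by
  set s : EuclideanSpace ℝ (Fin d) := w 0 + w 1 with hs
  set w' : Fin 2 → EuclideanSpace ℝ (Fin d) := fun c => w c - (1/2 : ℝ) • s with hw'
  have hfeas' : ∀ i, ∀ c, c ≠ y i → δ (y i) * ⟪w' (y i) - w' c, h i⟫_ℝ ≥ 1 := by
    intro i c hc
    have : w' (y i) - w' c = w (y i) - w c := by
      simp [hw']
    rw [this]
    exact feas i c hc
  have key := opt w' hfeas'
  have expand : ∀ c : Fin 2, ‖w' c‖ ^ 2 = ‖w c‖ ^ 2 - ⟪w c, s⟫_ℝ + (1/4) * ‖s‖ ^ 2 := by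
    intro c
    have := @norm_sub_sq_real (EuclideanSpace ℝ (Fin d)) _ _ (w c) ((1/2 : ℝ) • s)
    rw [this, inner_smul_right, norm_smul]
    simp
    ring
  rw [expand 0, expand 1] at key
  have hinner : ⟪w 0, s⟫_ℝ + ⟪w 1, s⟫_ℝ = ‖s‖ ^ 2 := by
    rw [← inner_add_left, ← hs, real_inner_self_eq_norm_sq]
  have hns : ‖s‖ ^ 2 ≤ 0 := by nlinarith
  have : s = 0 := by
    have := sq_nonneg ‖s‖
    have h0 : ‖s‖ ^ 2 = 0 := le_antisymm hns this
    simpa using (pow_eq_zero_iff (n := 2) (by norm_num)).mp h0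
  simpa [hs] using this
end

section
/- Let δ₁, δ₂ > 0 and let W = [w₁, w₂] ∈ ℝ^{d×2} be a minimizer of ‖w₁‖² + ‖w₂‖² subject to the constraints (δ_{y_i} w_{y_i} - δ_c w_c)ᵀ h_i ≥ 1 for all i and all c ≠ y_i (the CDT max-margin problem for binary classification). Then δ₁⁻¹ w₁ + δ₂⁻¹ w₂ = 0. -/
open scoped InnerProductSpace

/-- Centering of the binary CDT max-margin solution:
δ₁⁻¹ w₁ + δ₂⁻¹ w₂ = 0. -/
theorem cdt_centering {d n : ℕ}
    (h : Fin n → EuclideanSpace ℝ (Fin d)) (y : Fin n → Fin 2)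
    (δ : Fin 2 → ℝ) (hδ : ∀ c, 0 < δ c)
    (w : Fin 2 → EuclideanSpace ℝ (Fin d))
    (feas : ∀ i, ∀ c, c ≠ y i → ⟪δ (y i) • w (y i) - δ c • w c, h i⟫_ℝ ≥ 1)
    (opt : ∀ w' : Fin 2 → EuclideanSpace ℝ (Fin d),
      (∀ i, ∀ c, c ≠ y i → ⟪δ (y i) • w' (y i) - δ c • w' c, h i⟫_ℝ ≥ 1) →
      ‖w 0‖ ^ 2 + ‖w 1‖ ^ 2 ≤ ‖w' 0‖ ^ 2 + ‖w' 1‖ ^ 2) :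
    (δ 0)⁻¹ • w 0 + (δ 1)⁻¹ • w 1 = 0 := by
  set s : EuclideanSpace ℝ (Fin d) := (δ 0)⁻¹ • w 0 + (δ 1)⁻¹ • w 1 with hs
  have hd0 : (0:ℝ) < (δ 0)⁻¹ := inv_pos.mpr (hδ 0)
  have hd1 : (0:ℝ) < (δ 1)⁻¹ := inv_pos.mpr (hδ 1)
  have ha : 0 < ((δ 0)⁻¹) ^ 2 + ((δ 1)⁻¹) ^ 2 := by positivity
  set a : ℝ := ((δ 0)⁻¹) ^ 2 + ((δ 1)⁻¹) ^ 2 with haa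
  set w' : Fin 2 → EuclideanSpace ℝ (Fin d) :=
    fun c => w c - ((δ c)⁻¹ * a⁻¹) • s with hw'
  have feas' : ∀ i, ∀ c, c ≠ y i →
      ⟪δ (y i) • w' (y i) - δ c • w' c, h i⟫_ℝ ≥ 1 := by
    intro i c hc
    have key : ∀ c : Fin 2, δ c • (((δ c)⁻¹ * a⁻¹) • s) = a⁻¹ • s := by
      intro c
      rw [smul_smul, ← mul_assoc, mul_inv_cancel₀ (hδ c).ne', one_mul]
    have heq : δ (y i) • w' (y i) - δ c • w' c
        = δ (y i) • w (y i) - δ c • w c := by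
      simp only [hw', smul_sub, key]
      abel
    rw [heq]; exact feas i c hc
  have hn : ∀ c : Fin 2, ‖w' c‖ ^ 2
      = ‖w c‖ ^ 2 - 2 * ((δ c)⁻¹ * a⁻¹) * ⟪w c, s⟫_ℝ
        + ((δ c)⁻¹ * a⁻¹) ^ 2 * ‖s‖ ^ 2 := by
    intro c
    rw [hw']
    rw [@norm_sub_sq_real, real_inner_smul_right, norm_smul, mul_pow, Real.norm_eq_abs, sq_abs]
    ring
  have hS : ‖s‖ ^ 2 = (δ 0)⁻¹ * ⟪w 0, s⟫_ℝ + (δ 1)⁻¹ * ⟪w 1, s⟫_ℝ := by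
    rw [← real_inner_self_eq_norm_sq]
    nth_rewrite 1 [hs]
    rw [inner_add_left, real_inner_smul_left, real_inner_smul_left]
  have hopt := opt w' feas'
  rw [hn 0, hn 1] at hopt
  have h1 : (0:ℝ) < a⁻¹ := inv_pos.mpr ha
  have h2 : a * a⁻¹ = 1 := mul_inv_cancel₀ ha.ne'
  have hsum : ((δ 0)⁻¹ * a⁻¹) ^ 2 * ‖s‖ ^ 2 + ((δ 1)⁻¹ * a⁻¹) ^ 2 * ‖s‖ ^ 2
      = a⁻¹ * ‖s‖ ^ 2 := by
    have : ((δ 0)⁻¹ * a⁻¹) ^ 2 + ((δ 1)⁻¹ * a⁻¹) ^ 2 = (a * a⁻¹) * a⁻¹ := by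
      rw [haa]; ring
    rw [h2, one_mul] at this
    nlinarith [this]
  have hcross : 2 * ((δ 0)⁻¹ * a⁻¹) * ⟪w 0, s⟫_ℝ + 2 * ((δ 1)⁻¹ * a⁻¹) * ⟪w 1, s⟫_ℝ
      = 2 * a⁻¹ * ‖s‖ ^ 2 := by
    rw [hS]; ring
  have h4 : a⁻¹ * ‖s‖ ^ 2 ≤ 0 := by linarith
  have hkey : ‖s‖ ^ 2 ≤ 0 := by
    by_contra hp
    push_neg at hp
    exact absurd (mul_pos h1 hp) (by linarith)
  have hs0 : ‖s‖ ^ 2 = 0 := le_antisymm hkey (sq_nonneg _)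
  have hns : ‖s‖ = 0 := pow_eq_zero_iff two_ne_zero |>.mp hs0
  exact norm_eq_zero.mp hns
end

section
/- Let δ₁, δ₂ > 0. Suppose W^CDT = [w₁, w₂] minimizes ‖w₁‖² + ‖w₂‖² subject to (δ_{y_i} w_{y_i} - δ_c w_c)ᵀ h_i ≥ 1 for c ≠ y_i, and w* minimizes ‖w‖² subject to υ_i wᵀ h_i ≥ 1 (the standard binary SVM with labels υ_i = 1 if y_i = 1 and υ_i = -1 if y_i = 2). Then w₁ - w₂ = ((δ₁+δ₂)/(δ₁²+δ₂²)) w*; in particular the classification rules sign((w₁-w₂)ᵀx) and sign(w*ᵀx) coincide. -/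
open scoped InnerProductSpace

lemma cdt_decomp_sq {d : ℕ} (t : ℝ) (v a : EuclideanSpace ℝ (Fin d)) :
    ‖t • v + a‖ ^ 2 = t ^ 2 * ‖v‖ ^ 2 + 2 * t * ⟪v, a⟫_ℝ + ‖a‖ ^ 2 := by
  rw [norm_add_sq_real, real_inner_smul_left, norm_smul, mul_pow, Real.norm_eq_abs, sq_abs]
  ring

set_option maxHeartbeats 1000000 in
/-- The CDT max-margin classifier satisfies
w₁ - w₂ = ((δ₁+δ₂)/(δ₁²+δ₂²)) w*, where w* is the standard binary SVM solution
(labels υᵢ = 1 if yᵢ = 1, υᵢ = -1 if yᵢ = 2); in particular the classification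
rules sign((w₁-w₂)ᵀx) and sign(w*ᵀx) coincide. -/
theorem cdt_equals_ce {d n : ℕ}
    (h : Fin n → EuclideanSpace ℝ (Fin d)) (y : Fin n → Fin 2)
    (δ : Fin 2 → ℝ) (hδ : ∀ c, 0 < δ c)
    (w : Fin 2 → EuclideanSpace ℝ (Fin d))
    (feas : ∀ i, ∀ c, c ≠ y i → ⟪δ (y i) • w (y i) - δ c • w c, h i⟫_ℝ ≥ 1)
    (opt : ∀ w' : Fin 2 → EuclideanSpace ℝ (Fin d),
      (∀ i, ∀ c, c ≠ y i → ⟪δ (y i) • w' (y i) - δ c • w' c, h i⟫_ℝ ≥ 1) →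
      ‖w 0‖ ^ 2 + ‖w 1‖ ^ 2 ≤ ‖w' 0‖ ^ 2 + ‖w' 1‖ ^ 2)
    (υ : Fin n → ℝ) (hυ : ∀ i, υ i = if y i = 0 then 1 else -1)
    (wstar : EuclideanSpace ℝ (Fin d))
    (feasS : ∀ i, υ i * ⟪wstar, h i⟫_ℝ ≥ 1)
    (optS : ∀ w' : EuclideanSpace ℝ (Fin d),
      (∀ i, υ i * ⟪w', h i⟫_ℝ ≥ 1) → ‖wstar‖ ^ 2 ≤ ‖w'‖ ^ 2) :
    w 0 - w 1 = ((δ 0 + δ 1) / ((δ 0) ^ 2 + (δ 1) ^ 2)) • wstar ∧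
    ∀ x : EuclideanSpace ℝ (Fin d),
      (0 < ⟪w 0 - w 1, x⟫_ℝ ↔ 0 < ⟪wstar, x⟫_ℝ) ∧
      (⟪w 0 - w 1, x⟫_ℝ < 0 ↔ ⟪wstar, x⟫_ℝ < 0) := by
  have hδ0 := hδ 0
  have hδ1 := hδ 1
  set S : ℝ := δ 0 ^ 2 + δ 1 ^ 2 with hSdef
  have hS0 : 0 < S := by positivity
  have hsum : (δ 0 / S) ^ 2 + (δ 1 / S) ^ 2 = 1 / S := by
    rw [div_pow, div_pow, ← add_div, ← hSdef, sq,
      div_mul_cancel_left₀ hS0.ne', one_div]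
  set v : EuclideanSpace ℝ (Fin d) := δ 0 • w 0 - δ 1 • w 1 with hvdef
  -- v is feasible for the binary SVM
  have hvfeas : ∀ i, υ i * ⟪v, h i⟫_ℝ ≥ 1 := by
    intro i
    rcases (by omega : y i = 0 ∨ y i = 1) with hy | hy
    · have hf := feas i 1 (by rw [hy]; decide)
      rw [hy] at hf
      have huy : υ i = 1 := by rw [hυ i, hy]; simp
      rw [huy, one_mul]
      exact hf
    · have hf := feas i 0 (by rw [hy]; decide)
      rw [hy] at hf
      have huy : υ i = -1 := by rw [hυ i, hy]; simp
      have he : ⟪δ 1 • w 1 - δ 0 • w 0, h i⟫_ℝ = -⟪v, h i⟫_ℝ := by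
        rw [hvdef, ← inner_neg_left, neg_sub]
      rw [he] at hf
      rw [huy]
      linarith
  -- the candidate CDT solution built from wstar
  set w' : Fin 2 → EuclideanSpace ℝ (Fin d) :=
    fun c => if c = 0 then (δ 0 / S) • wstar else (-(δ 1 / S)) • wstar with hw'def
  have hw'0 : w' 0 = (δ 0 / S) • wstar := by simp [hw'def]
  have hw'1 : w' 1 = (-(δ 1 / S)) • wstar := by simp [hw'def]
  have hcomb : δ 0 • w' 0 - δ 1 • w' 1 = wstar := by
    rw [hw'0, hw'1, smul_smul, smul_smul, ← sub_smul]
    have hc : δ 0 * (δ 0 / S) - δ 1 * -(δ 1 / S) = 1 := by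
      field_simp [hSdef]
      ring
    rw [hc, one_smul]
  have hw'feas : ∀ i, ∀ c, c ≠ y i → ⟪δ (y i) • w' (y i) - δ c • w' c, h i⟫_ℝ ≥ 1 := by
    intro i c hc
    rcases (by omega : y i = 0 ∨ y i = 1) with hy | hy
    · have hc1 : c = 1 := by omega
      rw [hy, hc1, hcomb]
      have hf := feasS i
      have huy : υ i = 1 := by rw [hυ i, hy]; simp
      rw [huy, one_mul] at hf
      exact hf
    · have hc0 : c = 0 := by omega
      rw [hy, hc0]
      have he : δ 1 • w' 1 - δ 0 • w' 0 = -wstar := by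
        rw [← neg_sub, hcomb]
      rw [he, inner_neg_left]
      have hf := feasS i
      have huy : υ i = -1 := by rw [hυ i, hy]; simp
      rw [huy] at hf
      linarith
  -- objective value of the candidate
  have hw'obj : ‖w' 0‖ ^ 2 + ‖w' 1‖ ^ 2 = ‖wstar‖ ^ 2 / S := by
    rw [hw'0, hw'1, norm_smul, norm_smul, mul_pow, mul_pow, Real.norm_eq_abs,
      Real.norm_eq_abs, sq_abs, sq_abs]
    linear_combination ‖wstar‖ ^ 2 * hsum
  have hopt := opt w' hw'feas
  rw [hw'obj] at hopt
  -- decomposition of w 0, w 1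
  obtain ⟨a, hw0⟩ : ∃ a, w 0 = (δ 0 / S) • v + a := ⟨w 0 - (δ 0 / S) • v, by abel⟩
  obtain ⟨b, hw1⟩ : ∃ b, w 1 = (-(δ 1 / S)) • v + b := ⟨w 1 + (δ 1 / S) • v, by module⟩
  have hcoef1 : δ 0 * (δ 0 / S) + δ 1 * (δ 1 / S) = 1 := by
    field_simp [hSdef]
    ring
  have hab : δ 0 • a - δ 1 • b = 0 := by
    have ha : a = w 0 - (δ 0 / S) • v := by rw [hw0]; abel
    have hb : b = w 1 + (δ 1 / S) • v := by rw [hw1]; module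
    have key2 : δ 0 • a - δ 1 • b
        = (δ 0 • w 0 - δ 1 • w 1) - (δ 0 * (δ 0 / S) + δ 1 * (δ 1 / S)) • v := by
      rw [ha, hb]; module
    rw [key2, hcoef1, one_smul, ← hvdef, sub_self]
  have hcross : ⟪v, δ 0 • a - δ 1 • b⟫_ℝ = 0 := by rw [hab, inner_zero_right]
  rw [inner_sub_right, real_inner_smul_right, real_inner_smul_right] at hcross
  have hdecomp : ‖w 0‖ ^ 2 + ‖w 1‖ ^ 2 = ‖v‖ ^ 2 / S + (‖a‖ ^ 2 + ‖b‖ ^ 2) := by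
    rw [hw0, hw1, cdt_decomp_sq, cdt_decomp_sq]
    linear_combination ‖v‖ ^ 2 * hsum + (2 / S) * hcross
  -- norms comparison
  have hvopt := optS v hvfeas
  have key : ‖v‖ ^ 2 + S * (‖a‖ ^ 2 + ‖b‖ ^ 2) ≤ ‖wstar‖ ^ 2 := by
    have h' := hopt
    rw [hdecomp] at h'
    have h'' := mul_le_mul_of_nonneg_left h' hS0.le
    calc ‖v‖ ^ 2 + S * (‖a‖ ^ 2 + ‖b‖ ^ 2)
        = S * (‖v‖ ^ 2 / S + (‖a‖ ^ 2 + ‖b‖ ^ 2)) := by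
          field_simp
      _ ≤ S * (‖wstar‖ ^ 2 / S) := h''
      _ = ‖wstar‖ ^ 2 := by field_simp
  have hab0 : ‖a‖ ^ 2 + ‖b‖ ^ 2 ≤ 0 := by nlinarith [key, hvopt, hS0]
  have hna : (0:ℝ) ≤ ‖a‖ ^ 2 := by positivity
  have hnb : (0:ℝ) ≤ ‖b‖ ^ 2 := by positivity
  have ha0 : a = 0 := by
    have hz : ‖a‖ = 0 := by nlinarith [norm_nonneg a]
    exact norm_eq_zero.mp hz
  have hb0 : b = 0 := by
    have hz : ‖b‖ = 0 := by nlinarith [norm_nonneg b]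
    exact norm_eq_zero.mp hz
  have hSX : (0:ℝ) ≤ S * (‖a‖ ^ 2 + ‖b‖ ^ 2) := mul_nonneg hS0.le (by positivity)
  have hnveq : ‖v‖ ^ 2 = ‖wstar‖ ^ 2 := le_antisymm (by linarith) hvopt
  -- v = wstar via midpoint argument
  have hveq : v = wstar := by
    have hmfeas : ∀ i, υ i * ⟪(1/2 : ℝ) • (v + wstar), h i⟫_ℝ ≥ 1 := by
      intro i
      rw [real_inner_smul_left, inner_add_left]
      have h1 := hvfeas i
      have h2 := feasS i
      nlinarith [h1, h2]
    have hm := optS ((1/2 : ℝ) • (v + wstar)) hmfeas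
    have hpar : ‖v - wstar‖ ^ 2 = 2 * ‖v‖ ^ 2 + 2 * ‖wstar‖ ^ 2 - ‖v + wstar‖ ^ 2 := by
      have e1 := norm_add_sq_real v wstar
      have e2 := norm_sub_sq_real v wstar
      linarith
    have hmn : ‖(1/2 : ℝ) • (v + wstar)‖ ^ 2 = ‖v + wstar‖ ^ 2 / 4 := by
      rw [norm_smul, mul_pow, Real.norm_eq_abs,
        show |(1/2 : ℝ)| = 1/2 by norm_num]
      ring
    rw [hmn] at hm
    have hsub : ‖v - wstar‖ ^ 2 ≤ 0 := by
      rw [hpar, hnveq]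
      linarith
    have hn2 : ‖v - wstar‖ ^ 2 = 0 := le_antisymm hsub (by positivity)
    have hz : ‖v - wstar‖ = 0 := (pow_eq_zero_iff (by norm_num : 2 ≠ 0)).mp hn2
    exact sub_eq_zero.mp (norm_eq_zero.mp hz)
  -- conclude the explicit formulas
  have hmain : w 0 - w 1 = ((δ 0 + δ 1) / S) • wstar := by
    rw [hw0, hw1, ha0, hb0, add_zero, add_zero, hveq, ← sub_smul]
    congr 1
    ring
  have hcoef : 0 < (δ 0 + δ 1) / S := by positivity
  refine ⟨hmain, fun x => ?_⟩
  rw [hmain, real_inner_smul_left]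
  refine ⟨⟨fun hx => ?_, fun hx => mul_pos hcoef hx⟩,
    ⟨fun hx => ?_, fun hx => mul_neg_of_pos_of_neg hcoef hx⟩⟩
  · rcases mul_pos_iff.mp hx with ⟨_, h2⟩ | ⟨h1, _⟩
    · exact h2
    · exact absurd hcoef (not_lt.mpr h1.le)
  · rcases mul_neg_iff.mp hx with ⟨_, h2⟩ | ⟨h1, _⟩
    · exact h2
    · exact absurd hcoef (not_lt.mpr h1.le)
end

section
/- Let δ₁, δ₂ > 0. Suppose W^LDT = [w₁, w₂] minimizes ‖w₁‖² + ‖w₂‖² subject to δ_{y_i}(w_{y_i} - w_c)ᵀ h_i ≥ 1 for c ≠ y_i, and w* minimizes ‖w‖² subject to υ_i δ_{υ_i} w^T h_i ≥ 1 (the binary VS max-margin problem with δ₁ for label +1 and δ₂ for label -1). Then w₁ = w*/2 and w₂ = -w*/2, hence w₁ - w₂ = w*. -/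
open scoped InnerProductSpace

set_option maxHeartbeats 800000

/-- The LDT max-margin classifier satisfies w₁ = w*/2 and
w₂ = -w*/2, hence w₁ - w₂ = w*, where w* is the binary VS max-margin solution
(with δ₁ for label +1, i.e. class 1, and δ₂ for label -1, i.e. class 2). -/
theorem ldt_equals_vs {d n : ℕ}
    (h : Fin n → EuclideanSpace ℝ (Fin d)) (y : Fin n → Fin 2)
    (δ : Fin 2 → ℝ) (hδ : ∀ c, 0 < δ c)
    (w : Fin 2 → EuclideanSpace ℝ (Fin d))
    (feas : ∀ i, ∀ c, c ≠ y i → δ (y i) * ⟪w (y i) - w c, h i⟫_ℝ ≥ 1)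
    (opt : ∀ w' : Fin 2 → EuclideanSpace ℝ (Fin d),
      (∀ i, ∀ c, c ≠ y i → δ (y i) * ⟪w' (y i) - w' c, h i⟫_ℝ ≥ 1) →
      ‖w 0‖ ^ 2 + ‖w 1‖ ^ 2 ≤ ‖w' 0‖ ^ 2 + ‖w' 1‖ ^ 2)
    (υ : Fin n → ℝ) (hυ : ∀ i, υ i = if y i = 0 then 1 else -1)
    (wstar : EuclideanSpace ℝ (Fin d))
    (feasS : ∀ i, υ i * (δ (y i) * ⟪wstar, h i⟫_ℝ) ≥ 1)
    (optS : ∀ w' : EuclideanSpace ℝ (Fin d),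
      (∀ i, υ i * (δ (y i) * ⟪w', h i⟫_ℝ) ≥ 1) → ‖wstar‖ ^ 2 ≤ ‖w'‖ ^ 2) :
    w 0 = (1 / 2 : ℝ) • wstar ∧ w 1 = -((1 / 2 : ℝ) • wstar) ∧
    w 0 - w 1 = wstar := by

  set v := w 0 - w 1 with hv
  clear_value v
  -- v is feasible for the binary problem
  have feasV : ∀ i, υ i * (δ (y i) * ⟪v, h i⟫_ℝ) ≥ 1 := by
    intro i
    have hy : y i = 0 ∨ y i = 1 := by omega
    rcases hy with hy | hy
    · have h1 := feas i 1 (by rw [hy]; decide)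
      rw [hy] at h1
      have hu : υ i = 1 := by rw [hυ i, hy]; simp
      rw [hu, hy, one_mul, hv]
      exact h1
    · have h1 := feas i 0 (by rw [hy]; decide)
      rw [hy] at h1
      have hu : υ i = -1 := by rw [hυ i, hy]; simp
      have he : ⟪w 1 - w 0, h i⟫_ℝ = -⟪v, h i⟫_ℝ := by
        rw [hv, inner_sub_left, inner_sub_left]; ring
      rw [he] at h1
      rw [hu, hy]
      nlinarith [h1]
  -- the symmetric pair is feasible for LDT
  have feasW' : ∀ i, ∀ c, c ≠ y i →
      δ (y i) * ⟪(![(1/2:ℝ) • wstar, -((1/2:ℝ) • wstar)]) (y i)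
        - (![(1/2:ℝ) • wstar, -((1/2:ℝ) • wstar)]) c, h i⟫_ℝ ≥ 1 := by
    intro i c hc
    have hy : y i = 0 ∨ y i = 1 := by omega
    have hS := feasS i
    rcases hy with hy | hy
    · have hc1 : c = 1 := by omega
      rw [hy, hc1]
      have e : (![(1/2:ℝ) • wstar, -((1/2:ℝ) • wstar)]) 0
          - (![(1/2:ℝ) • wstar, -((1/2:ℝ) • wstar)]) 1 = wstar := by
        simp only [Matrix.cons_val_zero, Matrix.cons_val_one, Matrix.head_cons]; module
      rw [e]
      have hu : υ i = 1 := by rw [hυ i, hy]; simp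
      rw [hu, hy, one_mul] at hS
      exact hS
    · have hc0 : c = 0 := by omega
      rw [hy, hc0]
      have e : (![(1/2:ℝ) • wstar, -((1/2:ℝ) • wstar)]) 1
          - (![(1/2:ℝ) • wstar, -((1/2:ℝ) • wstar)]) 0 = -wstar := by
        simp only [Matrix.cons_val_one, Matrix.head_cons, Matrix.cons_val_zero]; module
      rw [e, inner_neg_left]
      have hu : υ i = -1 := by rw [hυ i, hy]; simp
      rw [hu, hy] at hS
      nlinarith [hS]
  have hA := opt _ feasW'
  have hn : ‖(![(1/2:ℝ) • wstar, -((1/2:ℝ) • wstar)]) 0‖ ^ 2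
      + ‖(![(1/2:ℝ) • wstar, -((1/2:ℝ) • wstar)]) 1‖ ^ 2
      = (1/2) * ‖wstar‖ ^ 2 := by
    have e1 : ‖(1/2:ℝ) • wstar‖ = (1/2) * ‖wstar‖ := by
      rw [norm_smul]; simp
    simp only [Matrix.cons_val_zero, Matrix.cons_val_one, Matrix.head_cons, norm_neg, e1]
    ring
  rw [hn] at hA
  have hB := optS v feasV
  -- parallelogram for w 0, w 1
  have p1 : ‖w 0 - w 1‖ ^ 2 + ‖w 0 + w 1‖ ^ 2 = 2 * (‖w 0‖ ^ 2 + ‖w 1‖ ^ 2) := by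
    rw [norm_add_sq_real, norm_sub_sq_real]; ring
  rw [← hv] at p1
  have hsum0 : w 0 + w 1 = 0 := by
    have hle : ‖w 0 + w 1‖ ^ 2 ≤ 0 := by nlinarith
    have : ‖w 0 + w 1‖ = 0 := by nlinarith [norm_nonneg (w 0 + w 1)]
    exact norm_eq_zero.mp this
  -- midpoint feasible
  have feasM : ∀ i, υ i * (δ (y i) * ⟪(1/2:ℝ) • (wstar + v), h i⟫_ℝ) ≥ 1 := by
    intro i
    have e : ⟪(1/2:ℝ) • (wstar + v), h i⟫_ℝ
        = (1/2) * (⟪wstar, h i⟫_ℝ + ⟪v, h i⟫_ℝ) := by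
      rw [real_inner_smul_left, inner_add_left]
    rw [e]
    have h1 := feasS i
    have h2 := feasV i
    nlinarith [h1, h2]
  have hC := optS _ feasM
  have hM : ‖(1/2:ℝ) • (wstar + v)‖ ^ 2 = (1/4) * ‖wstar + v‖ ^ 2 := by
    rw [norm_smul]; simp; ring
  rw [hM] at hC
  have p2 : ‖wstar + v‖ ^ 2 + ‖wstar - v‖ ^ 2 = 2 * (‖wstar‖ ^ 2 + ‖v‖ ^ 2) := by
    rw [norm_add_sq_real, norm_sub_sq_real]; ring
  have hveq : v = wstar := by
    have hle : ‖wstar - v‖ ^ 2 ≤ 0 := by nlinarith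
    have : ‖wstar - v‖ = 0 := by nlinarith [norm_nonneg (wstar - v)]
    have := norm_eq_zero.mp this
    have := sub_eq_zero.mp this
    exact this.symm
  have hw0 : w 0 = (1/2:ℝ) • wstar := by
    have hdd : w 0 + w 0 = wstar := by
      have : (w 0 + w 1) + (w 0 - w 1) = w 0 + w 0 := by abel
      rw [hsum0, ← hv, hveq, zero_add] at this
      exact this.symm
    have h2 := congrArg (fun x => (1/2:ℝ) • x) hdd
    simp only [smul_add, ← add_smul] at h2
    norm_num at h2
    exact h2
  refine ⟨hw0, ?_, hveq⟩
  rw [eq_neg_of_add_eq_zero_right hsum0, hw0]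
end

section
/- Fix k ≥ 2, positive integers ρk, ρ̄k with ρ+ρ̄=1, Δ > 0, R ∈ ℕ with R ≥ 1, n = k(Rρ̄+ρ). Let V ∈ ℝ^{k×(k-1)}, Λ = diag((√R/Δ)𝟙_{ρ̄k-1}, √((ρ̄+Rρ)/(ρ̄+ρΔ²)), 𝟙_{ρk-1}), and U_⊗ ∈ ℝ^{n×(k-1)} be as defined (with orthonormal bases P_{ρ̄k}, P_{ρk} of the complements of the all-ones vectors). Then V Λ U_⊗ᵀ equals the block matrix Ẑ ∈ ℝ^{k×n} given (after collapsing repeated columns, written as a k×k matrix Ξ with majority columns repeated R times) by: top-left block Δ⁻¹(I_{ρ̄k} - (1/(k(ρ̄+ρΔ²)))𝟙𝟙ᵀ), top-right block -(Δ/(k(ρ̄+ρΔ²)))𝟙_{ρ̄k}𝟙_{ρk}ᵀ, bottom-left block -(1/(k(ρ̄+ρΔ²)))𝟙_{ρk}𝟙_{ρ̄k}ᵀ, bottom-right block I_{ρk} - (Δ²/(k(ρ̄+ρΔ²)))𝟙𝟙ᵀ. In other words, the given V, Λ, U_⊗ constitute a singular value decomposition of the (δ,R)-SEL matrix Ẑ.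 -/

private lemma sel_svd_key (c1 c2 kk : ℝ) (hkk : 0 < kk) (h1 : 0 < c1) (h2 : 0 < c2) :
    Real.sqrt (c2 / c1) / (Real.sqrt (kk*c1) * Real.sqrt (kk*c2)) = 1 / (kk * c1) := by
  rw [Real.sqrt_div h2.le, Real.sqrt_mul hkk.le, Real.sqrt_mul hkk.le]
  have hs1 := Real.sq_sqrt h1.le
  have hsk := Real.sq_sqrt hkk.le
  have n1 : Real.sqrt c1 ≠ 0 := by positivity
  have n2 : Real.sqrt c2 ≠ 0 := by positivity
  have nk : Real.sqrt kk ≠ 0 := by positivity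
  field_simp
  linear_combination (-(Real.sqrt kk ^ 2) * hs1 - c1 * hsk)

/-- V Λ U_⊗ᵀ equals the (δ,R)-SEL matrix Ẑ, i.e. the factors
V, Λ, U_⊗ constitute an SVD of Ẑ.  Rows of Ẑ are indexed by Fin a ⊕ Fin b
(a = ρ̄k majority, b = ρk minority classes), columns by (Fin a × Fin R) ⊕ Fin b
(majority columns repeated R times); the blocks of Ẑ are
[Δ⁻¹S_{ρ̄k}(1/(k(ρ̄+ρΔ²))) ⊗ 𝟙_Rᵀ , -(Δ/(k(ρ̄+ρΔ²)))𝟙𝟙ᵀ ;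
 -(1/(k(ρ̄+ρΔ²)))𝟙𝟙ᵀ , S_{ρk}(Δ²/(k(ρ̄+ρΔ²)))] with S_m(σ) = I - σ𝟙𝟙ᵀ. -/
theorem sel_svd
    (a b k R : ℕ) (ha : 1 ≤ a) (hb : 1 ≤ b) (hk : k = a + b) (hk2 : 2 ≤ k)
    (hR : 1 ≤ R)
    (ρ ρbar Δ : ℝ) (hρ : 0 < ρ) (hρbar : 0 < ρbar) (hsum : ρ + ρbar = 1)
    (hΔ : 0 < Δ) (hak : (a : ℝ) = ρbar * k) (hbk : (b : ℝ) = ρ * k)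
    (P1 : Matrix (Fin a) (Fin (a - 1)) ℝ) (P2 : Matrix (Fin b) (Fin (b - 1)) ℝ)
    (hP1o : P1.transpose * P1 = 1)
    (hP1one : P1.transpose.mulVec (fun _ => (1 : ℝ)) = 0)
    (hP1proj : P1 * P1.transpose =
      (1 : Matrix (Fin a) (Fin a) ℝ) - ((a : ℝ))⁻¹ • Matrix.of (fun _ _ => (1 : ℝ)))
    (hP2o : P2.transpose * P2 = 1)
    (hP2one : P2.transpose.mulVec (fun _ => (1 : ℝ)) = 0)
    (hP2proj : P2 * P2.transpose =
      (1 : Matrix (Fin b) (Fin b) ℝ) - ((b : ℝ))⁻¹ • Matrix.of (fun _ _ => (1 : ℝ)))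
    (V : Matrix (Fin a ⊕ Fin b) ((Fin (a - 1) ⊕ Unit) ⊕ Fin (b - 1)) ℝ)
    (hV : V = Matrix.of fun r c =>
      match r, c with
      | Sum.inl i, Sum.inl (Sum.inl j) => P1 i j
      | Sum.inl _, Sum.inl (Sum.inr _) =>
          -Δ * Real.sqrt (ρ / ρbar) / Real.sqrt (k * (ρbar + ρ * Δ ^ 2))
      | Sum.inl _, Sum.inr _ => 0
      | Sum.inr _, Sum.inl (Sum.inl _) => 0
      | Sum.inr _, Sum.inl (Sum.inr _) =>
          Real.sqrt (ρbar / ρ) / Real.sqrt (k * (ρbar + ρ * Δ ^ 2))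
      | Sum.inr i, Sum.inr j => P2 i j)
    (Λ : Matrix ((Fin (a - 1) ⊕ Unit) ⊕ Fin (b - 1))
        ((Fin (a - 1) ⊕ Unit) ⊕ Fin (b - 1)) ℝ)
    (hΛ : Λ = Matrix.diagonal fun c =>
      match c with
      | Sum.inl (Sum.inl _) => Real.sqrt R / Δ
      | Sum.inl (Sum.inr _) => Real.sqrt ((ρbar + R * ρ) / (ρbar + ρ * Δ ^ 2))
      | Sum.inr _ => 1)
    (U : Matrix ((Fin a × Fin R) ⊕ Fin b) ((Fin (a - 1) ⊕ Unit) ⊕ Fin (b - 1)) ℝ)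
    (hU : U = Matrix.of fun r c =>
      match r, c with
      | Sum.inl (i, _), Sum.inl (Sum.inl j) => P1 i j / Real.sqrt R
      | Sum.inl _, Sum.inl (Sum.inr _) =>
          -Real.sqrt (ρ / ρbar) / Real.sqrt (k * (ρbar + R * ρ))
      | Sum.inl _, Sum.inr _ => 0
      | Sum.inr _, Sum.inl (Sum.inl _) => 0
      | Sum.inr _, Sum.inl (Sum.inr _) =>
          Real.sqrt (ρbar / ρ) / Real.sqrt (k * (ρbar + R * ρ))
      | Sum.inr i, Sum.inr j => P2 i j)
    (Z : Matrix (Fin a ⊕ Fin b) ((Fin a × Fin R) ⊕ Fin b) ℝ)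
    (hZ : Z = Matrix.of fun r c =>
      match r, c with
      | Sum.inl i, Sum.inl (i', _) =>
          Δ⁻¹ * ((if i = i' then 1 else 0) - 1 / (k * (ρbar + ρ * Δ ^ 2)))
      | Sum.inl _, Sum.inr _ => -Δ / (k * (ρbar + ρ * Δ ^ 2))
      | Sum.inr _, Sum.inl _ => -1 / (k * (ρbar + ρ * Δ ^ 2))
      | Sum.inr i, Sum.inr i' =>
          (if i = i' then 1 else 0) - Δ ^ 2 / (k * (ρbar + ρ * Δ ^ 2))) :
    V * Λ * U.transpose = Z := by
  
  subst hV hΛ hU hZ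
  have hkpos : (0:ℝ) < k := by exact_mod_cast Nat.lt_of_lt_of_le Nat.zero_lt_two hk2
  have hRpos : (0:ℝ) < R := by exact_mod_cast hR
  have hc1 : (0:ℝ) < ρbar + ρ*Δ^2 := by positivity
  have hc2 : (0:ℝ) < ρbar + R*ρ := by positivity
  have hmix : Real.sqrt (ρ / ρbar) * Real.sqrt (ρbar / ρ) = 1 := by
    rw [← Real.sqrt_mul (by positivity)]
    rw [show ρ / ρbar * (ρbar / ρ) = 1 by field_simp]
    exact Real.sqrt_one
  have hsq1 : Real.sqrt (ρ / ρbar) * Real.sqrt (ρ / ρbar) = ρ / ρbar :=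
    Real.mul_self_sqrt (by positivity)
  have hsq2 : Real.sqrt (ρbar / ρ) * Real.sqrt (ρbar / ρ) = ρbar / ρ :=
    Real.mul_self_sqrt (by positivity)
  have hkey : Real.sqrt ((ρbar + R*ρ) / (ρbar + ρ*Δ^2)) /
      (Real.sqrt (k*(ρbar + ρ*Δ^2)) * Real.sqrt (k*(ρbar + R*ρ)))
      = 1 / (k * (ρbar + ρ*Δ^2)) := sel_svd_key _ _ _ hkpos hc1 hc2
  have hsR : Real.sqrt R ≠ 0 := by positivity
  have hΔ' : Δ ≠ 0 := ne_of_gt hΔ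
  have hkc1 : (k:ℝ) * (ρbar + ρ*Δ^2) ≠ 0 := by positivity
  have hpp1 : ∀ i i' : Fin a, (∑ j, P1 i j * P1 i' j)
      = (if i = i' then 1 else 0) - ((a:ℝ))⁻¹ := by
    intro i i'
    have := congrFun (congrFun hP1proj i) i'
    simpa [Matrix.mul_apply, Matrix.one_apply, Matrix.sub_apply, Matrix.smul_apply,
      Matrix.transpose_apply] using this
  have hpp2 : ∀ i i' : Fin b, (∑ j, P2 i j * P2 i' j)
      = (if i = i' then 1 else 0) - ((b:ℝ))⁻¹ := by
    intro i i'
    have := congrFun (congrFun hP2proj i) i'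
    simpa [Matrix.mul_apply, Matrix.one_apply, Matrix.sub_apply, Matrix.smul_apply,
      Matrix.transpose_apply] using this
  ext r c
  rw [Matrix.mul_apply]
  simp only [Matrix.mul_diagonal, Matrix.transpose_apply, Matrix.of_apply]
  rcases r with i | i <;> rcases c with ⟨i', rr⟩ | i' <;>
    simp only [Fintype.sum_sum_type, Fintype.sum_unique, mul_zero, zero_mul, mul_one,
      Finset.sum_const_zero, add_zero, zero_add]
  · -- top-left
    have hsum1 : (∑ x : Fin (a-1), P1 i x * (Real.sqrt R / Δ) * (P1 i' x / Real.sqrt R))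
        = Δ⁻¹ * ((if i = i' then 1 else 0) - ((a:ℝ))⁻¹) := by
      rw [← hpp1 i i', Finset.mul_sum]
      refine Finset.sum_congr rfl fun j _ => ?_
      field_simp
    rw [hsum1]
    rw [show -Δ * Real.sqrt (ρ / ρbar) / Real.sqrt (↑k * (ρbar + ρ * Δ ^ 2)) *
        Real.sqrt ((ρbar + ↑R * ρ) / (ρbar + ρ * Δ ^ 2)) *
        (-Real.sqrt (ρ / ρbar) / Real.sqrt (↑k * (ρbar + ↑R * ρ)))
      = Δ * (Real.sqrt (ρ / ρbar) * Real.sqrt (ρ / ρbar)) *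
        (Real.sqrt ((ρbar + ↑R * ρ) / (ρbar + ρ * Δ ^ 2)) /
          (Real.sqrt (↑k * (ρbar + ρ * Δ ^ 2)) * Real.sqrt (↑k * (ρbar + ↑R * ρ)))) by ring]
    rw [hsq1, hkey, hak]
    have hρ' : ρ ≠ 0 := ne_of_gt hρ
    have hρbar' : ρbar ≠ 0 := ne_of_gt hρbar
    have hk' : (k:ℝ) ≠ 0 := ne_of_gt hkpos
    have hc1' : ρbar + ρ*Δ^2 ≠ 0 := ne_of_gt hc1
    rcases eq_or_ne i i' with h | h <;> simp only [h, if_pos, if_neg, ite_true, ite_false,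
      ne_eq, not_false_eq_true] <;> field_simp <;> ring
  · -- top-right
    rw [show -Δ * Real.sqrt (ρ / ρbar) / Real.sqrt (↑k * (ρbar + ρ * Δ ^ 2)) *
        Real.sqrt ((ρbar + ↑R * ρ) / (ρbar + ρ * Δ ^ 2)) *
        (Real.sqrt (ρbar / ρ) / Real.sqrt (↑k * (ρbar + ↑R * ρ)))
      = -Δ * (Real.sqrt (ρ / ρbar) * Real.sqrt (ρbar / ρ)) *
        (Real.sqrt ((ρbar + ↑R * ρ) / (ρbar + ρ * Δ ^ 2)) /
          (Real.sqrt (↑k * (ρbar + ρ * Δ ^ 2)) * Real.sqrt (↑k * (ρbar + ↑R * ρ)))) by ring]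
    rw [hmix, hkey]
    ring
  · -- bottom-left
    rw [show Real.sqrt (ρbar / ρ) / Real.sqrt (↑k * (ρbar + ρ * Δ ^ 2)) *
        Real.sqrt ((ρbar + ↑R * ρ) / (ρbar + ρ * Δ ^ 2)) *
        (-Real.sqrt (ρ / ρbar) / Real.sqrt (↑k * (ρbar + ↑R * ρ)))
      = -(Real.sqrt (ρ / ρbar) * Real.sqrt (ρbar / ρ)) *
        (Real.sqrt ((ρbar + ↑R * ρ) / (ρbar + ρ * Δ ^ 2)) /
          (Real.sqrt (↑k * (ρbar + ρ * Δ ^ 2)) * Real.sqrt (↑k * (ρbar + ↑R * ρ)))) by ring]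
    rw [hmix, hkey]
    ring
  · -- bottom-right
    rw [hpp2 i i']
    rw [show Real.sqrt (ρbar / ρ) / Real.sqrt (↑k * (ρbar + ρ * Δ ^ 2)) *
        Real.sqrt ((ρbar + ↑R * ρ) / (ρbar + ρ * Δ ^ 2)) *
        (Real.sqrt (ρbar / ρ) / Real.sqrt (↑k * (ρbar + ↑R * ρ)))
      = (Real.sqrt (ρbar / ρ) * Real.sqrt (ρbar / ρ)) *
        (Real.sqrt ((ρbar + ↑R * ρ) / (ρbar + ρ * Δ ^ 2)) /
          (Real.sqrt (↑k * (ρbar + ρ * Δ ^ 2)) * Real.sqrt (↑k * (ρbar + ↑R * ρ)))) by ring]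
    rw [hsq2, hkey, hbk]
    have hρ' : ρ ≠ 0 := ne_of_gt hρ
    have hk' : (k:ℝ) ≠ 0 := ne_of_gt hkpos
    have hc1' : ρbar + ρ*Δ^2 ≠ 0 := ne_of_gt hc1
    rcases eq_or_ne i i' with h | h <;> simp only [h, if_pos, if_neg, ite_true, ite_false,
      ne_eq, not_false_eq_true] <;> field_simp <;> ring
end

section
/- Fix δ₁, δ₂ > 0 and linearly separable binary data (h_i, y_i) with y_i ∈ {1,2}. Consider the problem: minimize ‖w₁‖² + ‖w₂‖² over (w₁,w₂) subject to δ_{y_i}(w_{y_i}-w_c)ᵀh_i ≥ 1 for c ≠ y_i. Then adding the extra constraint w₂ = -w₁ does not change the optimal value, and under this constraint the problem is equivalent to minimizing 2‖w₁‖² subject to 2δ₁ w₁ᵀh_i ≥ 1 for i with y_i = 1 and -2δ₂ w₁ᵀh_i ≥ 1 for i with y_i = 2. -/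
open scoped InnerProductSpace

section Aux

variable {d n : ℕ}

private lemma fin2_ne {a b : Fin 2} (hab : a ≠ b) :
    (b = 0 ∧ a = 1) ∨ (b = 1 ∧ a = 0) := by omega

private lemma feas_iff (h : Fin n → EuclideanSpace ℝ (Fin d)) (y : Fin n → Fin 2)
    (δ : Fin 2 → ℝ) (w1 : EuclideanSpace ℝ (Fin d)) :
    (∀ i, ∀ c, c ≠ y i →
        δ (y i) * ⟪(![w1, -w1]) (y i) - (![w1, -w1]) c, h i⟫_ℝ ≥ 1) ↔
    ((∀ i, y i = 0 → 2 * δ 0 * ⟪w1, h i⟫_ℝ ≥ 1) ∧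
     (∀ i, y i = 1 → -(2 * δ 1) * ⟪w1, h i⟫_ℝ ≥ 1)) := by
  constructor
  · intro H
    constructor
    · intro i hyi
      have := H i 1 (by omega)
      rw [hyi] at this
      simp only [Matrix.cons_val_zero, Matrix.cons_val_one, Matrix.head_cons,
        inner_sub_left, inner_neg_left] at this
      ring_nf at this ⊢
      linarith
    · intro i hyi
      have := H i 0 (by omega)
      rw [hyi] at this
      simp only [Matrix.cons_val_zero, Matrix.cons_val_one, Matrix.head_cons,
        inner_sub_left, inner_neg_left] at this
      ring_nf at this ⊢
      linarith
  · rintro ⟨H0, H1⟩ i c hc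
    rcases fin2_ne hc with ⟨hy, hc'⟩ | ⟨hy, hc'⟩
    · subst hc'
      have := H0 i hy
      rw [hy]
      simp only [Matrix.cons_val_zero, Matrix.cons_val_one, Matrix.head_cons,
        inner_sub_left, inner_neg_left]
      ring_nf at this ⊢
      linarith
    · subst hc'
      have := H1 i hy
      rw [hy]
      simp only [Matrix.cons_val_zero, Matrix.cons_val_one, Matrix.head_cons,
        inner_sub_left, inner_neg_left]
      ring_nf at this ⊢
      linarith

end Aux

/-- Adding the constraint w₂ = -w₁ to the binary LDT max-margin
problem does not change the optimal value, and under this constraint the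
feasibility conditions are exactly those of the single-vector problem:
2δ₁ w₁ᵀhᵢ ≥ 1 for yᵢ = 1 and -2δ₂ w₁ᵀhᵢ ≥ 1 for yᵢ = 2 (objective 2‖w₁‖²). -/
theorem ldt_symmetrized_reduction {d n : ℕ}
    (h : Fin n → EuclideanSpace ℝ (Fin d)) (y : Fin n → Fin 2)
    (δ : Fin 2 → ℝ) (hδ : ∀ c, 0 < δ c)
    (hsep : ∃ w : Fin 2 → EuclideanSpace ℝ (Fin d),
      ∀ i, ∀ c, c ≠ y i → δ (y i) * ⟪w (y i) - w c, h i⟫_ℝ ≥ 1) :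
    sInf {v : ℝ | ∃ w : Fin 2 → EuclideanSpace ℝ (Fin d),
        (∀ i, ∀ c, c ≠ y i → δ (y i) * ⟪w (y i) - w c, h i⟫_ℝ ≥ 1) ∧
        v = ‖w 0‖ ^ 2 + ‖w 1‖ ^ 2} =
      sInf {v : ℝ | ∃ w1 : EuclideanSpace ℝ (Fin d),
        (∀ i, ∀ c, c ≠ y i →
          δ (y i) * ⟪(![w1, -w1]) (y i) - (![w1, -w1]) c, h i⟫_ℝ ≥ 1) ∧
        v = 2 * ‖w1‖ ^ 2} ∧
    ∀ w1 : EuclideanSpace ℝ (Fin d),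
      (∀ i, ∀ c, c ≠ y i →
          δ (y i) * ⟪(![w1, -w1]) (y i) - (![w1, -w1]) c, h i⟫_ℝ ≥ 1) ↔
      ((∀ i, y i = 0 → 2 * δ 0 * ⟪w1, h i⟫_ℝ ≥ 1) ∧
       (∀ i, y i = 1 → -(2 * δ 1) * ⟪w1, h i⟫_ℝ ≥ 1)) := by
  set A := {v : ℝ | ∃ w : Fin 2 → EuclideanSpace ℝ (Fin d),
        (∀ i, ∀ c, c ≠ y i → δ (y i) * ⟪w (y i) - w c, h i⟫_ℝ ≥ 1) ∧
        v = ‖w 0‖ ^ 2 + ‖w 1‖ ^ 2} with hA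
  set B := {v : ℝ | ∃ w1 : EuclideanSpace ℝ (Fin d),
        (∀ i, ∀ c, c ≠ y i →
          δ (y i) * ⟪(![w1, -w1]) (y i) - (![w1, -w1]) c, h i⟫_ℝ ≥ 1) ∧
        v = 2 * ‖w1‖ ^ 2} with hB
  have symm : ∀ w : Fin 2 → EuclideanSpace ℝ (Fin d),
      (∀ i, ∀ c, c ≠ y i → δ (y i) * ⟪w (y i) - w c, h i⟫_ℝ ≥ 1) →
      ∃ v' ∈ B, v' ≤ ‖w 0‖ ^ 2 + ‖w 1‖ ^ 2 := by
    intro w hw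
    set w1' : EuclideanSpace ℝ (Fin d) := (2:ℝ)⁻¹ • (w 0 - w 1) with hw1'
    refine ⟨2 * ‖w1'‖ ^ 2, ⟨w1', ?_, rfl⟩, ?_⟩
    · intro i c hc
      rcases fin2_ne hc with ⟨hy, hc'⟩ | ⟨hy, hc'⟩
      · subst hc'
        have key : (![w1', -w1']) 0 - (![w1', -w1']) 1 = w 0 - w 1 := by
          simp only [Matrix.cons_val_zero, Matrix.cons_val_one, Matrix.head_cons, hw1']
          module
        have h2 := hw i 1 (by omega)
        rw [hy] at h2 ⊢
        rw [key]
        exact h2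
      · subst hc'
        have key : (![w1', -w1']) 1 - (![w1', -w1']) 0 = w 1 - w 0 := by
          simp only [Matrix.cons_val_zero, Matrix.cons_val_one, Matrix.head_cons, hw1']
          module
        have h2 := hw i 0 (by omega)
        rw [hy] at h2 ⊢
        rw [key]
        have key2 : w 1 - w 0 = w 1 - w 0 := rfl
        exact h2
    · have h1 : ‖w1'‖ ≤ (2:ℝ)⁻¹ * (‖w 0‖ + ‖w 1‖) := by
        rw [hw1', norm_smul]
        simp only [norm_inv, Real.norm_ofNat]
        gcongr
        exact norm_sub_le _ _
      have h0 : (0:ℝ) ≤ ‖w1'‖ := norm_nonneg _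
      nlinarith [sq_nonneg (‖w 0‖ - ‖w 1‖), mul_le_mul h1 h1 h0 (by positivity),
        norm_nonneg (w 0), norm_nonneg (w 1)]
  have hBne : B.Nonempty := by
    obtain ⟨w, hw⟩ := hsep
    obtain ⟨v', hv', _⟩ := symm w hw
    exact ⟨v', hv'⟩
  have hBsub : B ⊆ A := by
    rintro v ⟨w1, hw1, rfl⟩
    refine ⟨![w1, -w1], hw1, ?_⟩
    simp only [Matrix.cons_val_zero, Matrix.cons_val_one, Matrix.head_cons, norm_neg]
    ring
  have hAne : A.Nonempty := hBne.mono hBsub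
  have hAbdd : BddBelow A := by
    refine ⟨0, ?_⟩
    rintro v ⟨w, _, rfl⟩
    positivity
  have hBbdd : BddBelow B := hAbdd.mono hBsub
  constructor
  · apply le_antisymm
    · exact csInf_le_csInf hAbdd hBne hBsub
    · apply le_csInf hAne
      rintro v ⟨w, hw, rfl⟩
      obtain ⟨v', hv'B, hv'le⟩ := symm w hw
      exact le_trans (csInf_le hBbdd hv'B) hv'le
  · exact feas_iff h y δ
end
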